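/- Fix an integer n ≥ 2, parameters q_1, …, q_n > 0 and α_1 ≥ α_2 ≥ … ≥ α_{n−1} > α_n > 0, a constant w_n > 0, set Λ = ((Σ_{l=1}^{n} 1/q_l) − 1) / (Σ_{l=1}^{n} 1/(α_l q_l)), and assume α_n · Σ_{l=1}^{n} 1/(α_l q_l) > (Σ_{l=1}^{n} 1/q_l) − 1. Then the subsystem has a unique internal fixed point (w_1*, …, w_{n−1}*, x_1*, …, x_n*), and its coordinates are given by x_i* = 1 − Λ/α_i for 1 ≤ i ≤ n, and (w_1*, …, w_{n−1}*)ᵀ = w_n · R^{−1} (x_1*, …, x_{n−1}*)ᵀ, where R is the invertible (n−1)×(n−1) matrix with diagonal entries q_j − x_j* and off-diagonal entries −x_j* in row j. -/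

import Mathlib

/-- The subsystem (with `wₙ` held constant) has a unique internal fixed point,
given by `x*ᵢ = 1 - Λ/αᵢ` and `(w*₁,…,w*_{n-1})ᵀ = wₙ R⁻¹ (x*₁,…,x*_{n-1})ᵀ`. -/
theorem stmt_4 (n : ℕ) (hn : 2 ≤ n) (q α : Fin n → ℝ)
    (hq : ∀ i, 0 < q i) (hα : ∀ i, 0 < α i)
    (hmono : ∀ i j : Fin n, i ≤ j → α j ≤ α i)
    (hstrict : α ⟨n - 1, by omega⟩ < α ⟨n - 2, by omega⟩)
    (wn : ℝ) (hwn : 0 < wn)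
    (Λ : ℝ) (hΛ : Λ = ((∑ l, 1 / q l) - 1) / ∑ l, 1 / (α l * q l))
    (hcond : α ⟨n - 1, by omega⟩ * ∑ l, 1 / (α l * q l) > (∑ l, 1 / q l) - 1)
    (xstar : Fin n → ℝ) (hxstar : ∀ i, xstar i = 1 - Λ / α i)
    (R : Matrix (Fin (n - 1)) (Fin (n - 1)) ℝ)
    (hR : R = Matrix.of fun i j =>
      if i = j then q (Fin.castLE (Nat.sub_le n 1) i) - xstar (Fin.castLE (Nat.sub_le n 1) i)
      else -xstar (Fin.castLE (Nat.sub_le n 1) i))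
    (wstar : Fin (n - 1) → ℝ)
    (hwstar : wstar = wn • (R⁻¹.mulVec fun j => xstar (Fin.castLE (Nat.sub_le n 1) j))) :
    IsUnit R ∧
    ((∀ j, 0 < wstar j) ∧ (∀ i, 0 < xstar i) ∧
      (∀ j : Fin (n - 1), α (Fin.castLE (Nat.sub_le n 1) j) * wstar j *
        (1 - Λ / α (Fin.castLE (Nat.sub_le n 1) j) - xstar (Fin.castLE (Nat.sub_le n 1) j)) = 0) ∧
      (∀ j : Fin (n - 1), wstar j * q (Fin.castLE (Nat.sub_le n 1) j) -
        xstar (Fin.castLE (Nat.sub_le n 1) j) * (wn + ∑ l, wstar l) = 0) ∧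
      wn * q ⟨n - 1, by omega⟩ - xstar ⟨n - 1, by omega⟩ * (wn + ∑ l, wstar l) = 0) ∧
    (∀ (w : Fin (n - 1) → ℝ) (x : Fin n → ℝ),
      (∀ j, 0 < w j) → (∀ i, 0 < x i) →
      (∀ j : Fin (n - 1), α (Fin.castLE (Nat.sub_le n 1) j) * w j *
        (1 - Λ / α (Fin.castLE (Nat.sub_le n 1) j) - x (Fin.castLE (Nat.sub_le n 1) j)) = 0) →
      (∀ j : Fin (n - 1), w j * q (Fin.castLE (Nat.sub_le n 1) j) -
        x (Fin.castLE (Nat.sub_le n 1) j) * (wn + ∑ l, w l) = 0) →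
      wn * q ⟨n - 1, by omega⟩ - x ⟨n - 1, by omega⟩ * (wn + ∑ l, w l) = 0 →
      w = wstar ∧ x = xstar) := by
  obtain ⟨m, rfl⟩ : ∃ m, n = m + 1 := ⟨n - 1, by omega⟩
  have hm : 1 ≤ m := by omega
  have hc : ∀ j : Fin (m + 1 - 1), Fin.castLE (Nat.sub_le (m + 1) 1) j = Fin.castSucc j :=
    fun j => rfl
  have hlast : (⟨m + 1 - 1, by omega⟩ : Fin (m + 1)) = Fin.last m := rfl
  set T : ℝ := ∑ l, 1 / (α l * q l) with hTdef
  set S : ℝ := ∑ l, 1 / q l with hSdef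
  have hTpos : 0 < T :=
    Finset.sum_pos (fun i _ => by have := hα i; have := hq i; positivity) ⟨0, Finset.mem_univ 0⟩
  have hΛlast : Λ < α (Fin.last m) := by
    rw [hΛ, div_lt_iff₀ hTpos]
    rw [hlast] at hcond
    linarith [hcond]
  have hΛi : ∀ i, Λ < α i :=
    fun i => lt_of_lt_of_le hΛlast (hmono i (Fin.last m) (Fin.le_last i))
  have hxpos : ∀ i, 0 < xstar i := by
    intro i
    rw [hxstar, sub_pos, div_lt_one (hα i)]
    exact hΛi i
  have hsum1 : ∑ i, xstar i / q i = 1 := by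
    have key : ∀ i : Fin (m + 1), xstar i / q i = 1 / q i - Λ * (1 / (α i * q i)) := by
      intro i
      have h1 : α i ≠ 0 := ne_of_gt (hα i)
      have h2 : q i ≠ 0 := ne_of_gt (hq i)
      rw [hxstar]
      field_simp
    rw [Finset.sum_congr rfl fun i _ => key i, Finset.sum_sub_distrib, ← Finset.mul_sum,
      ← hSdef, ← hTdef, hΛ, div_mul_cancel₀ _ (ne_of_gt hTpos)]
    ring
  set xl : ℝ := xstar (Fin.last m) with hxl
  set ql : ℝ := q (Fin.last m) with hql
  have hxlpos : 0 < xl := hxpos _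
  have hqlpos : 0 < ql := hq _
  have hA : ∑ j : Fin m, xstar j.castSucc / q j.castSucc = 1 - xl / ql := by
    rw [Fin.sum_univ_castSucc] at hsum1
    linarith
  set V : ℝ := wn * ql / xl with hVdef
  have hVpos : 0 < V := by positivity
  set w0 : Fin (m + 1 - 1) → ℝ := fun j => xstar j.castSucc * V / q j.castSucc with hw0
  have hw0pos : ∀ j, 0 < w0 j := by
    intro j
    have := hxpos j.castSucc
    have := hq j.castSucc
    simp only [hw0]
    positivity
  have hsum_gen : ∀ v : Fin (m + 1 - 1) → ℝ,
      (∀ j, v j = xstar j.castSucc * (wn + ∑ l, v l) / q j.castSucc) →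
      wn + ∑ l, v l = V := by
    intro v hv
    set W : ℝ := ∑ l, v l with hW
    have hWval : W = (wn + W) * (1 - xl / ql) := by
      calc W = ∑ l, xstar l.castSucc * (wn + W) / q l.castSucc :=
            Finset.sum_congr rfl fun l _ => hv l
        _ = (wn + W) * ∑ l : Fin m, xstar l.castSucc / q l.castSucc := by
            rw [Finset.mul_sum]
            exact Finset.sum_congr rfl fun l _ => by ring
        _ = (wn + W) * (1 - xl / ql) := by rw [hA]
    have hwnval : wn = (wn + W) * (xl / ql) := by
      calc wn = wn + W - W := by ring
        _ = (wn + W) - (wn + W) * (1 - xl / ql) := by rw [← hWval]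
        _ = (wn + W) * (xl / ql) := by ring
    rw [hVdef]
    field_simp at hwnval ⊢
    linarith
  have hsw0 : ∑ l, w0 l = V - wn := by
    have h1 : ∑ l, w0 l = V * ∑ l : Fin m, xstar l.castSucc / q l.castSucc := by
      rw [Finset.mul_sum]
      exact Finset.sum_congr rfl fun l _ => by simp only [hw0]; ring
    rw [h1, hA, hVdef]
    field_simp
  have hw0prop : ∀ j, w0 j = xstar j.castSucc * (wn + ∑ l, w0 l) / q j.castSucc := by
    intro j
    rw [hsw0, hw0]
    ring_nf
  have hVsum0 : wn + ∑ l, w0 l = V := hsum_gen w0 hw0prop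
  have hRv : ∀ (v : Fin (m + 1 - 1) → ℝ) (i : Fin (m + 1 - 1)),
      R.mulVec v i = q i.castSucc * v i - xstar i.castSucc * ∑ j, v j := by
    intro v i
    rw [hR]
    simp only [Matrix.mulVec, dotProduct, Matrix.of_apply, hc]
    have split : ∀ j : Fin (m + 1 - 1),
        (if i = j then q i.castSucc - xstar i.castSucc else -xstar i.castSucc) * v j
        = (if i = j then q i.castSucc * v j else 0) - xstar i.castSucc * v j := by
      intro j
      by_cases h : i = j <;> simp [h] <;> ring
    rw [Finset.sum_congr rfl fun j _ => split j, Finset.sum_sub_distrib, ← Finset.mul_sum,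
      Finset.sum_ite_eq Finset.univ i (fun j => q i.castSucc * v j)]
    simp
  have hdet : R.det ≠ 0 := by
    intro h
    obtain ⟨v, hv, hv0⟩ := Matrix.exists_mulVec_eq_zero_iff.2 h
    have hvform : ∀ j : Fin (m + 1 - 1), v j = xstar j.castSucc * (∑ l, v l) / q j.castSucc := by
      intro j
      have hj0 := congrFun hv0 j
      rw [hRv] at hj0
      simp only [Pi.zero_apply] at hj0
      have hj : q j.castSucc * v j - xstar j.castSucc * (∑ l, v l) = 0 := hj0
      have hq' : q j.castSucc ≠ 0 := ne_of_gt (hq _)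
      field_simp
      have hj2 : q j.castSucc * v j - xstar j.castSucc * (∑ l : Fin m, v l) = 0 := hj
      linear_combination hj
    have hs0 : ∑ l, v l = 0 := by
      set s : ℝ := ∑ l, v l with hs
      have hseq : s = s * (1 - xl / ql) := by
        calc s = ∑ l, xstar l.castSucc * s / q l.castSucc :=
              Finset.sum_congr rfl fun l _ => hvform l
          _ = s * ∑ l : Fin m, xstar l.castSucc / q l.castSucc := by
              rw [Finset.mul_sum]
              exact Finset.sum_congr rfl fun l _ => by ring
          _ = s * (1 - xl / ql) := by rw [hA]
      have h2 : s * (xl / ql) = 0 := by linarith [hseq]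
      have h3 : xl / ql ≠ 0 := ne_of_gt (by positivity)
      exact (mul_eq_zero.1 h2).resolve_right h3
    apply hv
    funext j
    rw [hvform j, hs0]
    simp
  have hUnit : IsUnit R := (Matrix.isUnit_iff_isUnit_det R).2 (isUnit_iff_ne_zero.2 hdet)
  have hRw0 : R.mulVec w0 = wn • fun j : Fin (m + 1 - 1) =>
      xstar (Fin.castLE (Nat.sub_le (m + 1) 1) j) := by
    funext i
    rw [hRv, hsw0]
    simp only [Pi.smul_apply, smul_eq_mul, hc, hw0]
    have hq' : q i.castSucc ≠ 0 := ne_of_gt (hq _)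
    field_simp
    ring
  have hws : wstar = w0 := by
    rw [hwstar, ← Matrix.mulVec_smul, ← hRw0, Matrix.mulVec_mulVec,
      Matrix.nonsing_inv_mul R (isUnit_iff_ne_zero.2 hdet), Matrix.one_mulVec]
  refine ⟨hUnit, ⟨?_, hxpos, ?_, ?_, ?_⟩, ?_⟩
  · intro j; rw [hws]; exact hw0pos j
  · intro j
    rw [hxstar]
    ring
  · intro j
    rw [hws, hc, hVsum0, hw0prop j, hVsum0]
    have hq' : q j.castSucc ≠ 0 := ne_of_gt (hq _)
    field_simp
    ring
  · rw [hws, hVsum0, hlast, ← hxl, ← hql, hVdef]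
    field_simp
    ring
  · intro w x hwpos hxpos' h1 h2 h3
    have hxeqc : ∀ j : Fin (m + 1 - 1), x j.castSucc = xstar j.castSucc := by
      intro j
      have h := h1 j
      rw [hc] at h
      have hαw : α j.castSucc * w j ≠ 0 :=
        ne_of_gt (mul_pos (hα _) (hwpos j))
      have h0 : 1 - Λ / α j.castSucc - x j.castSucc = 0 :=
        (mul_eq_zero.1 h).resolve_left hαw
      rw [hxstar]
      linarith
    have hwform : ∀ j, w j = xstar j.castSucc * (wn + ∑ l, w l) / q j.castSucc := by
      intro j
      have h := h2 j
      rw [hc, hxeqc j] at h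
      have h' : w j * q j.castSucc - xstar j.castSucc * (wn + ∑ l, w l) = 0 := h
      have hq' : q j.castSucc ≠ 0 := ne_of_gt (hq _)
      field_simp
      have h2' : w j * q j.castSucc - xstar j.castSucc * (wn + ∑ l : Fin m, w l) = 0 := h'
      linear_combination h'
    have hVw : wn + ∑ l, w l = V := hsum_gen w hwform
    have hweq : w = wstar := by
      rw [hws]
      funext j
      rw [hwform j, hVw, hw0prop j, hVsum0]
    refine ⟨hweq, ?_⟩
    funext i
    induction i using Fin.lastCases with
    | last =>
      rw [hlast, hVw] at h3
      have hxlast : x (Fin.last m) * V = wn * ql := by rw [hql]; linarith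
      have hxlV : xl * V = wn * ql := by
        rw [hVdef]
        field_simp
      have hVne : V ≠ 0 := ne_of_gt hVpos
      rw [← hxl]
      exact mul_right_cancel₀ hVne (hxlast.trans hxlV.symm)
    | cast j => exact hxeqc j
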